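/- For every integer n ≥ 1, the odd cycle C_{2n+1} (the cycle graph on 2n+1 vertices) is [n]-edge geodetic, and the minimum number of n-geodesics needed to cover all edges of C_{2n+1} is 3, i.e. |gen(C_{2n+1})| = 3. -/

import Mathlib

open SimpleGraph
open Fin.CommRing

/-- A walk is a `k`-geodesic if it has length `k` and is a shortest path
between its endpoints. -/
def IsKGeodesic {V : Type*} (G : SimpleGraph V) (k : ℕ) {u v : V} (w : G.Walk u v) : Prop :=
  w.length = k ∧ G.dist u v = k

/-- A graph is `k`-edge geodetic if every edge lies on some `k`-geodesic. -/
def IsEdgeGeodetic {V : Type*} (G : SimpleGraph V) (k : ℕ) : Prop :=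
  ∀ e ∈ G.edgeSet, ∃ (u v : V) (w : G.Walk u v), IsKGeodesic G k w ∧ e ∈ w.edges

/-- A graph is `[k]`-edge geodetic if it is `k`-edge geodetic but not `(k+1)`-edge geodetic. -/
def IsMaxEdgeGeodetic {V : Type*} (G : SimpleGraph V) (k : ℕ) : Prop :=
  IsEdgeGeodetic G k ∧ ¬ IsEdgeGeodetic G (k + 1)

/-- `genNum G k` is the minimum number of `k`-geodesics of `G` whose edges
together cover all edges of `G`. -/
noncomputable def genNum {V : Type*} (G : SimpleGraph V) (k : ℕ) : ℕ :=
  sInf {r : ℕ | ∃ f : Fin r → Σ u : V, Σ v : V, G.Walk u v,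
    (∀ i, IsKGeodesic G k (f i).2.2) ∧
    ∀ e ∈ G.edgeSet, ∃ i, e ∈ (f i).2.2.edges}

namespace CO

variable {N : ℕ}

lemma val_one' (hN : 1 ≤ N) : (1 : Fin (N+1)).val = 1 := by
  rw [Fin.val_one']; exact Nat.mod_eq_of_lt (by omega)

lemma adj_succ (hN : 1 ≤ N) (u : Fin (N+1)) : (cycleGraph (N+1)).Adj u (u+1) := by
  rw [cycleGraph_adj']
  right
  rw [add_sub_cancel_left, CO.val_one' hN]

def fwdWalk (hN : 1 ≤ N) (u : Fin (N+1)) :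
    (ℓ : ℕ) → (cycleGraph (N+1)).Walk u (u + (ℓ : Fin (N+1)))
  | 0 => Walk.nil.copy rfl (by simp)
  | (ℓ+1) => (Walk.cons (CO.adj_succ hN u) (CO.fwdWalk hN (u+1) ℓ)).copy rfl
      (by push_cast; ring)

lemma fwdWalk_length (hN : 1 ≤ N) (u : Fin (N+1)) (ℓ : ℕ) :
    (CO.fwdWalk hN u ℓ).length = ℓ := by
  induction ℓ generalizing u with
  | zero => simp [CO.fwdWalk]
  | succ ℓ ih => simp [CO.fwdWalk, ih]

lemma fwdWalk_edges (hN : 1 ≤ N) (u : Fin (N+1)) {ℓ i : ℕ} (hi : i < ℓ) :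
    s(u + (i : Fin (N+1)), u + (i : Fin (N+1)) + 1) ∈ (CO.fwdWalk hN u ℓ).edges := by
  induction ℓ generalizing u i with
  | zero => omega
  | succ ℓ ih =>
    rw [CO.fwdWalk, Walk.edges_copy, Walk.edges_cons]
    cases i with
    | zero =>
      have h0 : u + ((0:ℕ) : Fin (N+1)) = u := by push_cast; ring
      rw [h0]
      exact List.mem_cons_self
    | succ i =>
      refine List.mem_cons_of_mem _ ?_
      have h := ih (u+1) (i := i) (by omega)
      rw [show u + ((i+1:ℕ) : Fin (N+1)) = u + 1 + (i : Fin (N+1)) by push_cast; ring]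
      exact h

lemma walk_decomp {u v : Fin (N+1)} (w : (cycleGraph (N+1)).Walk u v) :
    ∃ a b : ℕ, a + b = w.length ∧ (a : Fin (N+1)) - b = v - u := by
  induction w with
  | nil => exact ⟨0, 0, by simp, by simp⟩
  | @cons u x v h p ih =>
    obtain ⟨a, b, hab, he⟩ := ih
    rcases (cycleGraph_adj'.mp h) with h1 | h1
    · have hN : 1 ≤ N := by
        have := (u - x).isLt
        omega
      have hux : u - x = 1 := Fin.ext (by rw [h1, CO.val_one' hN])
      have hx : x = u - 1 := by linear_combination -hux
      rw [hx] at he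
      refine ⟨a, b+1, by rw [Walk.length_cons]; omega, ?_⟩
      push_cast
      linear_combination he
    · have hN : 1 ≤ N := by
        have := (x - u).isLt
        omega
      have hux : x - u = 1 := Fin.ext (by rw [h1, CO.val_one' hN])
      have hx : x = u + 1 := by linear_combination hux
      rw [hx] at he
      refine ⟨a+1, b, by rw [Walk.length_cons]; omega, ?_⟩
      push_cast
      linear_combination he

lemma length_lb {u v : Fin (N+1)} (w : (cycleGraph (N+1)).Walk u v) :
    min (v - u).val (N + 1 - (v - u).val) ≤ w.length := by
  obtain ⟨a, b, hab, he⟩ := CO.walk_decomp w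
  set d := (v - u).val with hd
  have hv : ((d : ℕ) : Fin (N+1)) = v - u := Fin.cast_val_eq_self _
  have hfin : ((a : ℕ) : Fin (N+1)) = ((d + b : ℕ) : Fin (N+1)) := by
    push_cast
    linear_combination he - hv
  have hz : ((a : ℕ) : ZMod (N+1)) = ((d + b : ℕ) : ZMod (N+1)) := hfin
  have hmod : a ≡ d + b [MOD N+1] := (ZMod.natCast_eq_natCast_iff _ _ _).mp hz
  have hdvd : ((N+1 : ℕ) : ℤ) ∣ ((d + b : ℕ) : ℤ) - (a : ℤ) := hmod.dvd
  obtain ⟨k, hk⟩ := hdvd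
  have hdlt : d < N + 1 := by rw [hd]; exact (v - u).isLt
  have hcase : k ≤ -1 ∨ k = 0 ∨ 1 ≤ k := by omega
  have hm1 := Nat.min_le_left d (N + 1 - d)
  have hm2 := Nat.min_le_right d (N + 1 - d)
  rcases hcase with hk1 | hk1 | hk1
  · have h4 : ((N+1 : ℕ) : ℤ) * k ≤ -((N+1 : ℕ) : ℤ) := by nlinarith [Int.natCast_nonneg (N+1)]
    have : ((d + b : ℕ) : ℤ) - (a : ℤ) ≤ -((N+1:ℕ) : ℤ) := by rw [hk]; exact h4
    push_cast at this
    omega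
  · subst hk1
    simp at hk
    omega
  · have h4 : ((N+1 : ℕ) : ℤ) ≤ ((N+1 : ℕ) : ℤ) * k := by nlinarith [Int.natCast_nonneg (N+1)]
    have : ((N+1:ℕ) : ℤ) ≤ ((d + b : ℕ) : ℤ) - (a : ℤ) := by rw [hk]; exact h4
    push_cast at this
    omega

lemma dist_le_forward (hN : 1 ≤ N) (u v : Fin (N+1)) :
    (cycleGraph (N+1)).dist u v ≤ (v - u).val := by
  have h := SimpleGraph.dist_le (CO.fwdWalk hN u (v - u).val)
  rw [CO.fwdWalk_length] at h
  rwa [Fin.cast_val_eq_self, show u + (v - u) = v from by ring] at h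

lemma dist_le_n (n : ℕ) (hn : 1 ≤ n) (u v : Fin (2*n+1)) :
    (cycleGraph (2*n+1)).dist u v ≤ n := by
  have hN : 1 ≤ 2*n := by omega
  by_cases huv : u = v
  · subst huv; simp [SimpleGraph.dist_self]
  · have h1 : (cycleGraph (2*n+1)).dist u v ≤ (v - u).val := CO.dist_le_forward hN u v
    have h2 : (cycleGraph (2*n+1)).dist u v ≤ (u - v).val := by
      rw [SimpleGraph.dist_comm]; exact CO.dist_le_forward hN v u
    have hvu : v - u ≠ 0 := sub_ne_zero.mpr (Ne.symm huv)
    have huv' : u - v ≠ 0 := sub_ne_zero.mpr huv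
    have hvu' : (v - u).val ≠ 0 := fun hc => hvu (Fin.ext hc)
    have huv'' : (u - v).val ≠ 0 := fun hc => huv' (Fin.ext hc)
    have hval : ((v-u) + (u-v)).val = 0 := by
      rw [show (v-u) + (u-v) = 0 by ring]; rfl
    rw [Fin.val_add] at hval
    have hdvd : (2*n+1) ∣ (v-u).val + (u-v).val := Nat.dvd_of_mod_eq_zero hval
    obtain ⟨k, hk⟩ := hdvd
    have hb1 : (v-u).val < 2*n+1 := (v-u).isLt
    have hb2 : (u-v).val < 2*n+1 := (u-v).isLt
    have hpos1 : 0 < (v-u).val := Nat.pos_of_ne_zero hvu'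
    have hpos2 : 0 < (u-v).val := Nat.pos_of_ne_zero huv''
    match k, hk with
    | 0, hk => omega
    | 1, hk => omega
    | (k+2), hk =>
      have h6 : (2*n+1) * 2 ≤ (v-u).val + (u-v).val := by
        rw [hk]; exact Nat.mul_le_mul_left _ (by omega)
      omega

lemma dist_n (n : ℕ) (hn : 1 ≤ n) (u : Fin (2*n+1)) :
    (cycleGraph (2*n+1)).dist u (u + ((n:ℕ) : Fin (2*n+1))) = n := by
  have hN : 1 ≤ 2*n := by omega
  have hval : (((n:ℕ) : Fin (2*n+1))).val = n := by
    rw [Fin.val_natCast]; exact Nat.mod_eq_of_lt (by omega)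
  apply le_antisymm
  · have h := SimpleGraph.dist_le (CO.fwdWalk hN u n)
    rwa [CO.fwdWalk_length] at h
  · obtain ⟨w, hw⟩ :=
      (cycleGraph_connected).exists_walk_length_eq_dist u (u + ((n:ℕ) : Fin (2*n+1)))
    have h := CO.length_lb w
    rw [hw, add_sub_cancel_left, hval] at h
    omega

lemma edge_form {e : Sym2 (Fin (N+1))} (he : e ∈ (cycleGraph (N+1)).edgeSet) :
    ∃ x : Fin (N+1), e = s(x, x+1) := by
  induction e using Sym2.ind with
  | _ u v =>
    rw [SimpleGraph.mem_edgeSet] at he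
    rcases cycleGraph_adj'.mp he with h1 | h1
    · have hN : 1 ≤ N := by have := (u-v).isLt; omega
      have huv : u - v = 1 := Fin.ext (by rw [h1, CO.val_one' hN])
      refine ⟨v, ?_⟩
      rw [show u = v + 1 by linear_combination huv]
      exact Sym2.eq_swap
    · have hN : 1 ≤ N := by have := (v-u).isLt; omega
      have hvu : v - u = 1 := Fin.ext (by rw [h1, CO.val_one' hN])
      exact ⟨u, by rw [show v = u + 1 by linear_combination hvu]⟩

lemma cover_helper (c j : ℕ) (x : Fin (N+1)) (h : c + j = x.val) :
    x = ((c:ℕ) : Fin (N+1)) + ((j:ℕ) : Fin (N+1)) := by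
  rw [← Fin.cast_val_eq_self x, ← h]
  push_cast
  ring

end CO

/-- For every integer `n ≥ 1`, the odd cycle `C_{2n+1}` is `[n]`-edge geodetic and the
minimum number of `n`-geodesics needed to cover all its edges is `3`. -/
theorem cycle_odd_maxEdgeGeodetic (n : ℕ) (hn : 1 ≤ n) :
    IsMaxEdgeGeodetic (cycleGraph (2 * n + 1)) n ∧ genNum (cycleGraph (2 * n + 1)) n = 3 := by
  have hN : 1 ≤ 2 * n := by omega
  have hgeo : ∀ u : Fin (2*n+1), IsKGeodesic (cycleGraph (2*n+1)) n (CO.fwdWalk hN u n) :=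
    fun u => ⟨CO.fwdWalk_length hN u n, CO.dist_n n hn u⟩
  have hedge : ∀ x : Fin (2*n+1), s(x, x+1) ∈ (cycleGraph (2*n+1)).edgeSet :=
    fun x => CO.adj_succ hN x
  have hEG : IsEdgeGeodetic (cycleGraph (2*n+1)) n := by
    intro e he
    obtain ⟨x, rfl⟩ := CO.edge_form he
    refine ⟨x, _, CO.fwdWalk hN x n, hgeo x, ?_⟩
    have h := CO.fwdWalk_edges hN x (ℓ := n) (i := 0) (by omega)
    simpa using h
  have hnot : ¬ IsEdgeGeodetic (cycleGraph (2*n+1)) (n+1) := by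
    intro h
    obtain ⟨u, v, w, ⟨hlen, hdist⟩, hmem⟩ := h s((0 : Fin (2*n+1)), 0+1) (hedge 0)
    have := CO.dist_le_n n hn u v
    omega
  refine ⟨⟨hEG, hnot⟩, ?_⟩
  have h3 : ∃ f : Fin 3 → Σ u : Fin (2*n+1), Σ v : Fin (2*n+1), (cycleGraph (2*n+1)).Walk u v,
      (∀ i, IsKGeodesic (cycleGraph (2*n+1)) n (f i).2.2) ∧
      ∀ e ∈ (cycleGraph (2*n+1)).edgeSet, ∃ i, e ∈ (f i).2.2.edges := by
    refine ⟨![⟨_, _, CO.fwdWalk hN ((0:ℕ) : Fin (2*n+1)) n⟩,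
             ⟨_, _, CO.fwdWalk hN ((n:ℕ) : Fin (2*n+1)) n⟩,
             ⟨_, _, CO.fwdWalk hN ((n+1:ℕ) : Fin (2*n+1)) n⟩], ?_, ?_⟩
    · intro i; fin_cases i <;> exact hgeo _
    · intro e he
      obtain ⟨x, rfl⟩ := CO.edge_form he
      have hxlt := x.isLt
      rcases lt_or_ge x.val n with hx | hx
      · refine ⟨0, ?_⟩
        rw [CO.cover_helper 0 x.val x (by omega)]
        exact CO.fwdWalk_edges hN _ (by omega)
      · rcases lt_or_ge x.val (2*n) with hx2 | hx2
        · refine ⟨1, ?_⟩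
          rw [CO.cover_helper n (x.val - n) x (by omega)]
          exact CO.fwdWalk_edges hN _ (by omega)
        · refine ⟨2, ?_⟩
          rw [CO.cover_helper (n+1) (n-1) x (by omega)]
          exact CO.fwdWalk_edges hN _ (by omega)
  have hge : ∀ r : ℕ,
      (∃ f : Fin r → Σ u : Fin (2*n+1), Σ v : Fin (2*n+1), (cycleGraph (2*n+1)).Walk u v,
      (∀ i, IsKGeodesic (cycleGraph (2*n+1)) n (f i).2.2) ∧
      ∀ e ∈ (cycleGraph (2*n+1)).edgeSet, ∃ i, e ∈ (f i).2.2.edges) → 3 ≤ r := by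
    rintro r ⟨f, hf1, hf2⟩
    by_contra hr
    push_neg at hr
    have hinj : Function.Injective (fun x : Fin (2*n+1) => s(x, x+1)) := by
      intro x y hxy
      simp only [Sym2.eq, Sym2.rel_iff', Prod.mk.injEq, Prod.swap_prod_mk] at hxy
      rcases hxy with ⟨h1, _⟩ | ⟨h1, h2⟩
      · exact h1
      · exfalso
        subst h2
        have h0 : (0 : Fin (2*n+1)) = 2 := by linear_combination h1
        have h0' : (0 : Fin (2*n+1)) = ((2:ℕ) : Fin (2*n+1)) := by push_cast; exact h0
        have := congrArg Fin.val h0'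
        rw [Fin.val_natCast] at this
        simp only [Fin.val_zero] at this
        rw [Nat.mod_eq_of_lt (by omega)] at this
        omega
    have hsub : (Finset.univ.image (fun x : Fin (2*n+1) => s(x, x+1))) ⊆
        Finset.univ.biUnion (fun i : Fin r => (f i).2.2.edges.toFinset) := by
      intro e hemem
      obtain ⟨x, _, rfl⟩ := Finset.mem_image.mp hemem
      obtain ⟨i, hi⟩ := hf2 _ (hedge x)
      exact Finset.mem_biUnion.mpr ⟨i, Finset.mem_univ i, List.mem_toFinset.mpr hi⟩
    have h1 := Finset.card_le_card hsub
    rw [Finset.card_image_of_injective _ hinj, Finset.card_univ, Fintype.card_fin] at h1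
    have h2 := Finset.card_biUnion_le (s := (Finset.univ : Finset (Fin r)))
      (t := fun i => (f i).2.2.edges.toFinset)
    have h3' : ∀ i : Fin r, ((f i).2.2.edges.toFinset).card ≤ n := by
      intro i
      calc ((f i).2.2.edges.toFinset).card ≤ (f i).2.2.edges.length := (f i).2.2.edges.toFinset_card_le
      _ = (f i).2.2.length := (f i).2.2.length_edges
      _ = n := (hf1 i).1
    have h4 : ∑ i : Fin r, ((f i).2.2.edges.toFinset).card ≤ r * n := by
      calc ∑ i : Fin r, ((f i).2.2.edges.toFinset).card ≤ ∑ _i : Fin r, n :=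
            Finset.sum_le_sum (fun i _ => h3' i)
      _ = r * n := by simp [Finset.sum_const]
    have h5 : r * n ≤ 2 * n := Nat.mul_le_mul_right n (by omega)
    omega
  have hne : {r : ℕ | ∃ f : Fin r → Σ u : Fin (2*n+1), Σ v : Fin (2*n+1), (cycleGraph (2*n+1)).Walk u v,
      (∀ i, IsKGeodesic (cycleGraph (2*n+1)) n (f i).2.2) ∧
      ∀ e ∈ (cycleGraph (2*n+1)).edgeSet, ∃ i, e ∈ (f i).2.2.edges}.Nonempty := ⟨3, h3⟩
  unfold genNum
  exact le_antisymm (Nat.sInf_le h3) (hge _ (Nat.sInf_mem hne))
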